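/- For all integers k ≥ 1 and m ≥ 2, if m balls are thrown independently and uniformly at random into k bins, then the probability that no bin contains exactly one ball is at most (m−1)(m−2)/k² + 1/k. (Small-m case in the proof of Lemma 1: either both of the last two balls land in bins already occupied by earlier balls, or the second-to-last ball lands in a fresh bin and the last ball collides with it.) -/

import Mathlib

open MeasureTheory ProbabilityTheory

/-- if `m ≥ 2` balls are thrown independently and uniformly at
random into `k ≥ 1` bins, the probability that no bin contains exactly one
ball is at most `(m−1)(m−2)/k² + 1/k`. -/
theorem no_singleton_bin_bound (k m : ℕ) (hk : 1 ≤ k) (hm : 2 ≤ m)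
    (Ω : Type*) [MeasurableSpace Ω] (μ : Measure Ω) [IsProbabilityMeasure μ]
    (X : Fin m → Ω → Fin k) (hmeas : ∀ i, Measurable (X i))
    (hind : iIndepFun X μ)
    (hunif : ∀ (i : Fin m) (j : Fin k), μ {ω | X i ω = j} = (k : ENNReal)⁻¹) :
    μ {ω | ¬ ∃ j : Fin k, ∃! i : Fin m, X i ω = j} ≤
      ENNReal.ofReal (((m : ℝ) - 1) * ((m : ℝ) - 2) / k ^ 2 + 1 / k) := by
  classical
  have hk0 : (k : ENNReal) ≠ 0 := Nat.cast_ne_zero.mpr (by omega)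
  have hkt : (k : ENNReal) ≠ ⊤ := ENNReal.natCast_ne_top k
  have hcancel : (k : ENNReal) * (k : ENNReal)⁻¹ = 1 := ENNReal.mul_inv_cancel hk0 hkt
  obtain ⟨a, b, hab⟩ : ∃ a b : Fin m, a ≠ b :=
    ⟨⟨0, by omega⟩, ⟨1, by omega⟩, by simp [Fin.ext_iff]⟩
  -- the pairwise collision bound
  have hpair : μ {ω | X a ω = X b ω} ≤ (k : ENNReal)⁻¹ := by
    have hset : {ω | X a ω = X b ω} = ⋃ c : Fin k, (X a ⁻¹' {c} ∩ X b ⁻¹' {c}) := by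
      ext ω; simp [Set.mem_iUnion, eq_comm]
    rw [hset]
    calc μ (⋃ c : Fin k, (X a ⁻¹' {c} ∩ X b ⁻¹' {c}))
        ≤ ∑' c : Fin k, μ (X a ⁻¹' {c} ∩ X b ⁻¹' {c}) := measure_iUnion_le _
      _ = ∑ c : Fin k, μ (X a ⁻¹' {c} ∩ X b ⁻¹' {c}) := tsum_fintype _
      _ = ∑ c : Fin k, (k : ENNReal)⁻¹ * (k : ENNReal)⁻¹ := by
          refine Finset.sum_congr rfl fun c _ => ?_
          rw [(hind.indepFun hab).measure_inter_preimage_eq_mul _ _ trivial trivial]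
          have h1 : X a ⁻¹' {c} = {ω | X a ω = c} := rfl
          have h2 : X b ⁻¹' {c} = {ω | X b ω = c} := rfl
          rw [h1, h2, hunif, hunif]
      _ = k * ((k : ENNReal)⁻¹ * (k : ENNReal)⁻¹) := by
          rw [Finset.sum_const, Finset.card_univ, Fintype.card_fin, nsmul_eq_mul]
      _ = (k : ENNReal)⁻¹ := by
          rw [← mul_assoc, hcancel, one_mul]
  -- the quadruple collision bound
  have hquad : ∀ i j : Fin m, i ≠ a → i ≠ b → j ≠ a → j ≠ b → i ≠ j →
      μ {ω | X i ω = X a ω ∧ X j ω = X b ω} ≤ (k : ENNReal)⁻¹ * (k : ENNReal)⁻¹ := by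
    intro i j hia hib hja hjb hij
    have hset : {ω | X i ω = X a ω ∧ X j ω = X b ω} =
        ⋃ c : Fin k, ⋃ d : Fin k,
          (X i ⁻¹' {c} ∩ (X a ⁻¹' {c} ∩ (X j ⁻¹' {d} ∩ X b ⁻¹' {d}))) := by
      ext ω
      simp only [Set.mem_setOf_eq, Set.mem_iUnion, Set.mem_inter_iff, Set.mem_preimage,
        Set.mem_singleton_iff]
      constructor
      · rintro ⟨h1, h2⟩; exact ⟨X a ω, X b ω, h1, rfl, h2, rfl⟩
      · rintro ⟨c, d, hc1, hc2, hd1, hd2⟩; exact ⟨hc1.trans hc2.symm, hd1.trans hd2.symm⟩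
    have hmeasD : ∀ c d : Fin k,
        μ (X i ⁻¹' {c} ∩ (X a ⁻¹' {c} ∩ (X j ⁻¹' {d} ∩ X b ⁻¹' {d}))) =
          (k : ENNReal)⁻¹ * ((k : ENNReal)⁻¹ * ((k : ENNReal)⁻¹ * (k : ENNReal)⁻¹)) := by
      intro c d
      set sets : Fin m → Set (Fin k) := fun t => if t = i ∨ t = a then {c} else {d}
        with hsets
      have hsi : sets i = {c} := by simp [hsets]
      have hsa : sets a = {c} := by simp [hsets]
      have hsj : sets j = {d} := by simp [hsets, hij.symm, hja]
      have hsb : sets b = {d} := by simp [hsets, hib.symm, hab.symm]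
      have key := hind.measure_inter_preimage_eq_mul ({i, a, j, b} : Finset (Fin m))
        (sets := sets) (fun t _ => trivial)
      have hmem : i ∉ ({a, j, b} : Finset (Fin m)) := by simp [hia, hij, hib]
      have hmem2 : a ∉ ({j, b} : Finset (Fin m)) := by simp [hja.symm, hab]
      have hmem3 : j ∉ ({b} : Finset (Fin m)) := by simp [hjb]
      rw [Finset.set_biInter_insert, Finset.set_biInter_insert, Finset.set_biInter_insert,
        Finset.set_biInter_singleton, Finset.prod_insert hmem, Finset.prod_insert hmem2,
        Finset.prod_insert hmem3, Finset.prod_singleton, hsi, hsa, hsj, hsb] at key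
      rw [key]
      have hp : ∀ t : Fin m, ∀ e : Fin k, μ (X t ⁻¹' {e}) = (k : ENNReal)⁻¹ :=
        fun t e => hunif t e
      rw [hp, hp, hp, hp]
    rw [hset]
    calc μ (⋃ c : Fin k, ⋃ d : Fin k,
            (X i ⁻¹' {c} ∩ (X a ⁻¹' {c} ∩ (X j ⁻¹' {d} ∩ X b ⁻¹' {d}))))
        ≤ ∑' c : Fin k, μ (⋃ d : Fin k,
            (X i ⁻¹' {c} ∩ (X a ⁻¹' {c} ∩ (X j ⁻¹' {d} ∩ X b ⁻¹' {d})))) := measure_iUnion_le _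
      _ ≤ ∑' c : Fin k, ∑' d : Fin k,
            μ (X i ⁻¹' {c} ∩ (X a ⁻¹' {c} ∩ (X j ⁻¹' {d} ∩ X b ⁻¹' {d}))) :=
          ENNReal.tsum_le_tsum fun c => measure_iUnion_le _
      _ = ∑ c : Fin k, ∑ d : Fin k,
            μ (X i ⁻¹' {c} ∩ (X a ⁻¹' {c} ∩ (X j ⁻¹' {d} ∩ X b ⁻¹' {d}))) := by
          rw [tsum_fintype]; exact Finset.sum_congr rfl fun c _ => tsum_fintype _
      _ = ∑ c : Fin k, ∑ d : Fin k,
            ((k : ENNReal)⁻¹ * ((k : ENNReal)⁻¹ * ((k : ENNReal)⁻¹ * (k : ENNReal)⁻¹))) :=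
          Finset.sum_congr rfl fun c _ => Finset.sum_congr rfl fun d _ => hmeasD c d
      _ = (k : ENNReal) * ((k : ENNReal) *
            ((k : ENNReal)⁻¹ * ((k : ENNReal)⁻¹ * ((k : ENNReal)⁻¹ * (k : ENNReal)⁻¹)))) := by
          simp [Finset.sum_const, Finset.card_univ, mul_assoc]
      _ = (k : ENNReal)⁻¹ * (k : ENNReal)⁻¹ := by
          have heq : (k : ENNReal) * ((k : ENNReal) *
              ((k : ENNReal)⁻¹ * ((k : ENNReal)⁻¹ * ((k : ENNReal)⁻¹ * (k : ENNReal)⁻¹)))) =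
              ((k : ENNReal) * (k : ENNReal)⁻¹) * (((k : ENNReal) * (k : ENNReal)⁻¹) *
                ((k : ENNReal)⁻¹ * (k : ENNReal)⁻¹)) := by ring
          rw [heq, hcancel, one_mul, one_mul]
  -- the bad events
  obtain ⟨T, hT⟩ : ∃ T : Fin m → Fin m → Set Ω, ∀ i j, T i j =
      {ω | (i ≠ a ∧ i ≠ b ∧ j ≠ a ∧ j ≠ b ∧ i ≠ j) ∧ X i ω = X a ω ∧ X j ω = X b ω} :=
    ⟨_, fun i j => rfl⟩
  -- inclusion
  have hincl : {ω | ¬ ∃ j : Fin k, ∃! i : Fin m, X i ω = j} ⊆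
      {ω | X a ω = X b ω} ∪ ⋃ i, ⋃ j, T i j := by
    intro ω hω
    simp only [Set.mem_setOf_eq] at hω
    by_cases h : X a ω = X b ω
    · exact Or.inl h
    · have hna : ¬ ∃! i, X i ω = X a ω := fun h' => hω ⟨_, h'⟩
      have hnb : ¬ ∃! i, X i ω = X b ω := fun h' => hω ⟨_, h'⟩
      have hha : ∃ i, X i ω = X a ω ∧ i ≠ a := by
        by_contra hc
        push_neg at hc
        exact hna ⟨a, rfl, fun y hy => hc y hy⟩
      have hhb : ∃ j, X j ω = X b ω ∧ j ≠ b := by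
        by_contra hc
        push_neg at hc
        exact hnb ⟨b, rfl, fun y hy => hc y hy⟩
      obtain ⟨i, hi, hia⟩ := hha
      obtain ⟨j, hj, hjb⟩ := hhb
      have hib : i ≠ b := by
        intro he; rw [he] at hi; exact h hi.symm
      have hja : j ≠ a := by
        intro he; rw [he] at hj; exact h hj
      have hij : i ≠ j := by
        intro he; rw [he] at hi; exact h (hi.symm.trans hj)
      refine Or.inr (Set.mem_iUnion.2 ⟨i, Set.mem_iUnion.2 ⟨j, ?_⟩⟩)
      rw [hT]
      exact ⟨⟨hia, hib, hja, hjb, hij⟩, hi, hj⟩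
  -- bound on each T i j
  have hTbound : ∀ i j : Fin m, μ (T i j) ≤
      (if i = a ∨ i = b then 0 else 1) * ((if j = a ∨ j = b then 0 else 1) *
        ((k : ENNReal)⁻¹ * (k : ENNReal)⁻¹)) := by
    intro i j
    by_cases hcond : i ≠ a ∧ i ≠ b ∧ j ≠ a ∧ j ≠ b ∧ i ≠ j
    · obtain ⟨h1, h2, h3, h4, h5⟩ := hcond
      rw [if_neg (by tauto : ¬(i = a ∨ i = b)), if_neg (by tauto : ¬(j = a ∨ j = b)),
        one_mul, one_mul]
      refine le_trans (measure_mono ?_) (hquad i j h1 h2 h3 h4 h5)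
      rw [hT]
      intro ω hω
      exact hω.2
    · have hempty : T i j = ∅ := by
        rw [hT]
        ext ω
        simp only [Set.mem_setOf_eq, Set.mem_empty_iff_false, iff_false]
        intro hc; exact hcond hc.1
      rw [hempty, measure_empty]
      exact zero_le
  -- counting
  have hcard : (Finset.univ.filter (fun i : Fin m => ¬(i = a ∨ i = b))).card = m - 2 := by
    have hfe : Finset.univ.filter (fun i : Fin m => ¬(i = a ∨ i = b)) =
        ({a, b} : Finset (Fin m))ᶜ := by
      ext x; simp [Finset.mem_compl]
    rw [hfe, Finset.card_compl, Fintype.card_fin,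
      Finset.card_insert_of_notMem (by simp [hab]), Finset.card_singleton]
  have hsum1 : (∑ i : Fin m, (if i = a ∨ i = b then (0 : ENNReal) else 1)) =
      ((m - 2 : ℕ) : ENNReal) := by
    rw [Finset.sum_ite, Finset.sum_const, Finset.sum_const, hcard]
    simp
  -- main union bound
  have hmain : μ {ω | ¬ ∃ j : Fin k, ∃! i : Fin m, X i ω = j} ≤
      (k : ENNReal)⁻¹ + ((m - 2 : ℕ) : ENNReal) * (((m - 2 : ℕ) : ENNReal) *
        ((k : ENNReal)⁻¹ * (k : ENNReal)⁻¹)) := by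
    calc μ {ω | ¬ ∃ j : Fin k, ∃! i : Fin m, X i ω = j}
        ≤ μ ({ω | X a ω = X b ω} ∪ ⋃ i, ⋃ j, T i j) := measure_mono hincl
      _ ≤ μ {ω | X a ω = X b ω} + μ (⋃ i, ⋃ j, T i j) := measure_union_le _ _
      _ ≤ (k : ENNReal)⁻¹ + ∑ i : Fin m, ∑ j : Fin m, μ (T i j) := by
          refine add_le_add hpair ?_
          calc μ (⋃ i, ⋃ j, T i j) ≤ ∑' i : Fin m, μ (⋃ j, T i j) := measure_iUnion_le _
            _ ≤ ∑' i : Fin m, ∑' j : Fin m, μ (T i j) :=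
                ENNReal.tsum_le_tsum fun i => measure_iUnion_le _
            _ = ∑ i : Fin m, ∑ j : Fin m, μ (T i j) := by
                rw [tsum_fintype]; exact Finset.sum_congr rfl fun i _ => tsum_fintype _
      _ ≤ (k : ENNReal)⁻¹ + ∑ i : Fin m, ∑ j : Fin m,
            ((if i = a ∨ i = b then (0 : ENNReal) else 1) *
              ((if j = a ∨ j = b then (0 : ENNReal) else 1) *
                ((k : ENNReal)⁻¹ * (k : ENNReal)⁻¹))) := by
          refine add_le_add_right (Finset.sum_le_sum fun i _ => Finset.sum_le_sum fun j _ => ?_) _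
          exact hTbound i j
      _ = (k : ENNReal)⁻¹ + ((m - 2 : ℕ) : ENNReal) * (((m - 2 : ℕ) : ENNReal) *
            ((k : ENNReal)⁻¹ * (k : ENNReal)⁻¹)) := by
          congr 1
          rw [← hsum1, Finset.sum_mul]
          refine Finset.sum_congr rfl fun i _ => ?_
          rw [← Finset.mul_sum]
          congr 1
          exact (Finset.sum_mul _ _ _).symm
  -- final arithmetic
  refine hmain.trans ?_
  have hkR : (0 : ℝ) < (k : ℝ) := by exact_mod_cast Nat.pos_of_ne_zero (by omega)
  have h1 : ((m : ℝ) - 1) = ((m - 1 : ℕ) : ℝ) := by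
    rw [Nat.cast_sub (by omega : 1 ≤ m)]; norm_num
  have h2 : ((m : ℝ) - 2) = ((m - 2 : ℕ) : ℝ) := by
    rw [Nat.cast_sub hm]; norm_num
  rw [h1, h2, ENNReal.ofReal_add (by positivity) (by positivity),
    ENNReal.ofReal_div_of_pos (by positivity), ENNReal.ofReal_div_of_pos hkR,
    ENNReal.ofReal_one, ← Nat.cast_mul, ENNReal.ofReal_natCast,
    ENNReal.ofReal_pow (by positivity), ENNReal.ofReal_natCast, one_div]
  have hinv : (k : ENNReal)⁻¹ * (k : ENNReal)⁻¹ = ((k : ENNReal) ^ 2)⁻¹ := by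
    rw [ENNReal.inv_pow, pow_two]
  have hle : ((m - 2 : ℕ) : ENNReal) * ((m - 2 : ℕ) : ENNReal) ≤
      (((m - 1) * (m - 2) : ℕ) : ENNReal) := by
    rw [← Nat.cast_mul]
    exact Nat.cast_le.mpr (Nat.mul_le_mul (by omega) le_rfl)
  have harith : ((m - 2 : ℕ) : ENNReal) * (((m - 2 : ℕ) : ENNReal) *
      ((k : ENNReal)⁻¹ * (k : ENNReal)⁻¹)) ≤
      (((m - 1) * (m - 2) : ℕ) : ENNReal) / (k : ENNReal) ^ 2 := by
    calc ((m - 2 : ℕ) : ENNReal) * (((m - 2 : ℕ) : ENNReal) *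
        ((k : ENNReal)⁻¹ * (k : ENNReal)⁻¹))
        = (((m - 2 : ℕ) : ENNReal) * ((m - 2 : ℕ) : ENNReal)) * ((k : ENNReal) ^ 2)⁻¹ := by
          rw [hinv, ← mul_assoc]
      _ ≤ (((m - 1) * (m - 2) : ℕ) : ENNReal) * ((k : ENNReal) ^ 2)⁻¹ :=
          mul_le_mul_left hle _
      _ = (((m - 1) * (m - 2) : ℕ) : ENNReal) / (k : ENNReal) ^ 2 := rfl
  calc (k : ENNReal)⁻¹ + ((m - 2 : ℕ) : ENNReal) * (((m - 2 : ℕ) : ENNReal) *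
        ((k : ENNReal)⁻¹ * (k : ENNReal)⁻¹))
      ≤ (k : ENNReal)⁻¹ + (((m - 1) * (m - 2) : ℕ) : ENNReal) / (k : ENNReal) ^ 2 :=
        add_le_add_right harith _
    _ = (((m - 1) * (m - 2) : ℕ) : ENNReal) / (k : ENNReal) ^ 2 + (k : ENNReal)⁻¹ :=
        add_comm _ _
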